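/- Let P ⊆ ℝⁿ be a discrete point set and p ∈ P. If the Voronoi cell V(p) is a polytope, then p lies in the interior of conv(P). -/

import Mathlib

open scoped RealInnerProductSpace
open Set

noncomputable section

abbrev E (n : ℕ) := EuclideanSpace ℝ (Fin n)

/-- `P` is discrete: every bounded set contains only finitely many points of `P`. -/
def IsDiscrete' {n : ℕ} (P : Set (E n)) : Prop :=
  ∀ B : Set (E n), Bornology.IsBounded B → (P ∩ B).Finite

/-- The Voronoi cell of `p` relative to `P`. -/
def voronoiCell {n : ℕ} (P : Set (E n)) (p : E n) : Set (E n) :=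
  {x | ∀ q ∈ P, dist x p ≤ dist x q}

/-- A polyhedron: a finite intersection of closed half-spaces. -/
def IsPolyhedron {n : ℕ} (S : Set (E n)) : Prop :=
  ∃ (k : ℕ) (y : Fin k → E n) (α : Fin k → ℝ),
    S = ⋂ i, {x : E n | (inner ℝ x (y i) : ℝ) ≤ α i}

/-- A polytope: a bounded polyhedron. -/
def IsPolytope {n : ℕ} (S : Set (E n)) : Prop :=
  IsPolyhedron S ∧ Bornology.IsBounded S

/-- The half-space of points at least as close to `p` as to `q`. -/
def halfSpace {n : ℕ} (p q : E n) : Set (E n) :=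
  {x : E n | (inner ℝ (x - p) (q - p) : ℝ) ≤ (1/2) * ‖q - p‖^2}

/-- The conic hull: all nonnegative combinations of finitely many elements of `M`. -/
def coneHull {n : ℕ} (M : Set (E n)) : Set (E n) :=
  {x | ∃ (k : ℕ) (v : Fin k → E n) (c : Fin k → ℝ),
    (∀ i, v i ∈ M) ∧ (∀ i, 0 ≤ c i) ∧ x = ∑ i, c i • v i}

/-- The direction cone of `p`: the conic hull of `P - p`. -/
def dirCone {n : ℕ} (P : Set (E n)) (p : E n) : Set (E n) :=
  coneHull ((fun q => q - p) '' P)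

/-- A cone is finitely generated if it is the conic hull of finitely many vectors. -/
def FinitelyGeneratedCone {n : ℕ} (C : Set (E n)) : Prop :=
  ∃ (k : ℕ) (v : Fin k → E n), C = coneHull (Set.range v)

/-- `q` is Voronoi relevant for `p`: dropping `halfSpace p q` strictly enlarges the
intersection defining the Voronoi cell. -/
def VoronoiRelevant {n : ℕ} (P : Set (E n)) (p q : E n) : Prop :=
  (⋂ r ∈ P \ {p}, halfSpace p r) ⊂ ⋂ r ∈ P \ {p, q}, halfSpace p r


lemma exists_sep {n : ℕ} (C : Set (E n)) (hC : Convex ℝ C) (p : E n) (hpC : p ∈ C)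
    (hpi : p ∉ interior C) : ∃ u : E n, u ≠ 0 ∧ ∀ x ∈ C, ⟪x - p, u⟫ ≤ 0 := by
  by_cases hint : (interior C).Nonempty
  · obtain ⟨f, hf⟩ := geometric_hahn_banach_open_point (hC.interior) isOpen_interior hpi
    obtain ⟨x0, hx0⟩ := hint
    have hle : ∀ x ∈ C, f x ≤ f p := by
      intro x hx
      by_contra h
      push_neg at h
      have hx0p : f x0 < f p := hf x0 hx0
      set t : ℝ := (f x - f p) / (f x - f x0) with ht
      have hd : 0 < f x - f x0 := by linarith
      have ht0 : 0 < t := div_pos (by linarith) hd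
      have ht1 : t < 1 := (div_lt_one hd).2 (by linarith)
      have hmem : t • x0 + (1 - t) • x ∈ interior C :=
        hC.combo_interior_closure_mem_interior hx0 (subset_closure hx) ht0 (by linarith)
          (by ring)
      have := hf _ hmem
      simp only [map_add, map_smul, smul_eq_mul] at this
      have hfx : t * f x0 + (1 - t) * f x = f p := by
        have key : t * (f x - f x0) = f x - f p := by
          rw [ht]; exact div_mul_cancel₀ _ (ne_of_gt hd)
        linarith
      linarith
    set u : E n := (InnerProductSpace.toDual ℝ (E n)).symm f with hu
    have hinner : ∀ x : E n, ⟪u, x⟫ = f x := fun x => InnerProductSpace.toDual_symm_apply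
    refine ⟨u, ?_, ?_⟩
    · intro h0
      have h1 := hf x0 hx0
      rw [← hinner x0, ← hinner p, h0] at h1
      simp at h1
    · intro x hx
      rw [real_inner_comm, inner_sub_right, hinner, hinner]
      linarith [hle x hx]
  · have hspan : ¬ affineSpan ℝ C = ⊤ := by
      intro h
      exact hint (hC.interior_nonempty_iff_affineSpan_eq_top.2 h)
    have hdir : (affineSpan ℝ C).direction ≠ ⊤ := by
      intro h
      exact hspan ((AffineSubspace.direction_eq_top_iff_of_nonempty
        ⟨p, mem_affineSpan ℝ hpC⟩).1 h)
    have horth : ((affineSpan ℝ C).direction)ᗮ ≠ ⊥ := by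
      intro h
      exact hdir (by simpa using congrArg (fun (W : Submodule ℝ (E n)) => Wᗮ) h)
    obtain ⟨u, hu, hu0⟩ := Submodule.exists_mem_ne_zero_of_ne_bot horth
    refine ⟨u, hu0, fun x hx => ?_⟩
    have hxd : x - p ∈ (affineSpan ℝ C).direction := by
      simpa using AffineSubspace.vsub_mem_direction (mem_affineSpan ℝ hx) (mem_affineSpan ℝ hpC)
    exact le_of_eq (hu (x - p) hxd)

theorem stmt6 {n : ℕ} (P : Set (E n)) (hP : IsDiscrete' P) (p : E n) (hp : p ∈ P)
    (hpoly : IsPolytope (voronoiCell P p)) :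
    p ∈ interior (convexHull ℝ P) := by
  by_contra hpi
  obtain ⟨u, hu0, hsep⟩ := exists_sep (convexHull ℝ P) (convex_convexHull ℝ P)
    p (subset_convexHull ℝ P hp) hpi
  have hsep' : ∀ q ∈ P, ⟪q - p, u⟫ ≤ 0 := fun q hq => hsep q (subset_convexHull ℝ P hq)
  obtain ⟨R, hR⟩ := isBounded_iff_forall_norm_le.1 hpoly.2
  have hpmem : p ∈ voronoiCell P p := by
    intro q hq
    simp [voronoiCell, dist_self, dist_nonneg]
  have hpR : ‖p‖ ≤ R := hR p hpmem
  have hun : 0 < ‖u‖ := norm_pos_iff.2 hu0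
  set t : ℝ := (R + ‖p‖ + 1) / ‖u‖ with ht
  have hnum : 0 < R + ‖p‖ + 1 := by have := norm_nonneg p; linarith
  have ht0 : 0 ≤ t := le_of_lt (div_pos hnum hun)
  set x : E n := p + t • u with hx
  have hxmem : x ∈ voronoiCell P p := by
    intro q hq
    have h1 : dist x p = ‖t • u‖ := by
      rw [hx, dist_eq_norm]; congr 1; abel
    have h2 : dist x q = ‖(p - q) + t • u‖ := by
      rw [hx, dist_eq_norm]; congr 1; abel
    have hin : (0:ℝ) ≤ ⟪p - q, t • u⟫ := by
      rw [real_inner_smul_right]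
      have h3 : ⟪q - p, u⟫ ≤ 0 := hsep' q hq
      have h4 : ⟪p - q, u⟫ = - ⟪q - p, u⟫ := by
        rw [← inner_neg_left]; congr 1; abel
      nlinarith
    have hsq : (dist x p)^2 ≤ (dist x q)^2 := by
      rw [h1, h2, norm_add_sq_real]
      nlinarith [sq_nonneg ‖p - q‖]
    have := Real.sqrt_le_sqrt hsq
    rwa [Real.sqrt_sq dist_nonneg, Real.sqrt_sq dist_nonneg] at this
  have hxR : ‖x‖ ≤ R := hR x hxmem
  have htu : ‖t • u‖ = R + ‖p‖ + 1 := by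
    rw [norm_smul, Real.norm_eq_abs, abs_of_nonneg ht0, ht, div_mul_cancel₀ _ (ne_of_gt hun)]
  have : ‖t • u‖ ≤ ‖x‖ + ‖p‖ := by
    calc ‖t • u‖ = ‖x - p‖ := by congr 1; rw [hx]; abel
    _ ≤ ‖x‖ + ‖p‖ := norm_sub_le x p
  linarith
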